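/- Let p_1,…,p_n be i.i.d. uniform random elements of {1,…,d}, and let X_n = |{p_i : i ∈ {1,…,n}}| be the number of distinct values among them. Then for any real t with t ≤ 0.99·d and any n ≥ 750·t, P[X_n ≤ t·(1 + 2/10000)] ≤ exp(−min(d, n)/18). -/

import Mathlib

open MeasureTheory
open scoped ENNReal NNReal

noncomputable section

/-- The law of `n` i.i.d. uniform random elements of `{1,…,d}` (encoded as `Fin d`). -/
def uniformTuples (n d : ℕ) : Measure (Fin n → Fin d) :=
  Measure.pi fun _ => ((d : ℝ≥0∞))⁻¹ • Measure.count

lemma pow_div_factorial_le_exp (m : ℕ) : ((m : ℝ)) ^ m / m.factorial ≤ Real.exp m := by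
  have h := Real.sum_le_exp_of_nonneg (x := (m : ℝ)) (Nat.cast_nonneg m) (m + 1)
  refine le_trans ?_ h
  have : ((m : ℝ)) ^ m / m.factorial =
      ∑ i ∈ {m}, ((m : ℝ)) ^ i / i.factorial := by simp
  rw [this]
  refine Finset.sum_le_sum_of_subset_of_nonneg ?_ ?_
  · intro x hx
    simp only [Finset.mem_singleton] at hx
    simp [hx, Nat.lt_succ_self]
  · intro i _ _
    positivity

lemma key_real (d m n : ℕ) (hm : 1 ≤ m) (hmd : (m : ℝ) ≤ 0.9902 * d)
    (hnm : 749 * (m : ℝ) ≤ n) :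
    (d.choose m : ℝ) * ((m : ℝ) / d) ^ n ≤ Real.exp (-(min (d : ℝ) (n : ℝ)) / 18) := by
  have hm0 : (0 : ℝ) < m := by exact_mod_cast hm
  have hd0 : (0 : ℝ) < d := by nlinarith
  set L : ℝ := Real.log ((d : ℝ) / m) with hLdef
  have hdm0 : (0 : ℝ) < (d : ℝ) / m := by positivity
  have hexpL : Real.exp L = (d : ℝ) / m := Real.exp_log hdm0
  -- lower bound on L
  have hL1 : (0.0098 : ℝ) ≤ L := by
    rw [hLdef, Real.le_log_iff_exp_le hdm0]
    have h1 : (1 : ℝ) - 0.0098 ≤ Real.exp (-0.0098) := by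
      have := Real.add_one_le_exp (-0.0098 : ℝ); linarith
    have h2 : Real.exp (-0.0098 : ℝ) = (Real.exp 0.0098)⁻¹ := Real.exp_neg _
    have h3 : (0 : ℝ) < Real.exp 0.0098 := Real.exp_pos _
    have h4 : Real.exp (0.0098 : ℝ) ≤ 1 / 0.9902 := by
      rw [h2] at h1
      rw [le_div_iff₀ (by norm_num)]
      nlinarith [mul_inv_cancel₀ (ne_of_gt h3)]
    refine h4.trans ?_
    rw [div_le_div_iff₀ (by norm_num) hm0]
    linarith
  have hL0 : (0 : ℝ) < L := by linarith
  -- Step A : choose bound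
  have hA : (d.choose m : ℝ) ≤ Real.exp ((m : ℝ) * (1 + L)) := by
    have h1 : (d.choose m : ℝ) ≤ ((d : ℝ)) ^ m / m.factorial :=
      Nat.choose_le_pow_div m d
    have h2 : ((d : ℝ)) ^ m / m.factorial
        = ((d : ℝ) / m) ^ m * (((m : ℝ)) ^ m / m.factorial) := by
      field_simp
      rw [div_pow, div_mul_cancel₀ _ (by positivity)]
    have h3 : ((d : ℝ) / m) ^ m = Real.exp ((m : ℝ) * L) := by
      rw [← hexpL, ← Real.exp_nat_mul]
    have h4 : ((m : ℝ)) ^ m / m.factorial ≤ Real.exp m := pow_div_factorial_le_exp m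
    calc (d.choose m : ℝ) ≤ ((d : ℝ)) ^ m / m.factorial := h1
      _ = Real.exp ((m : ℝ) * L) * (((m : ℝ)) ^ m / m.factorial) := by rw [h2, h3]
      _ ≤ Real.exp ((m : ℝ) * L) * Real.exp m := by
          exact mul_le_mul_of_nonneg_left h4 (Real.exp_nonneg _)
      _ = Real.exp ((m : ℝ) * (1 + L)) := by rw [← Real.exp_add]; ring_nf
  -- Step B
  have hB : ((m : ℝ) / d) ^ n = Real.exp ((n : ℝ) * (-L)) := by
    have h1 : (m : ℝ) / d = Real.exp (-L) := by
      rw [Real.exp_neg, hexpL, inv_div]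
    rw [h1, ← Real.exp_nat_mul]
  have hABpos : (0 : ℝ) ≤ ((m : ℝ) / d) ^ n := by positivity
  have hchoosepos : (0 : ℝ) ≤ (d.choose m : ℝ) := Nat.cast_nonneg _
  have step : (d.choose m : ℝ) * ((m : ℝ) / d) ^ n ≤
      Real.exp ((m : ℝ) * (1 + L) + (n : ℝ) * (-L)) := by
    rw [Real.exp_add, hB]
    exact mul_le_mul_of_nonneg_right hA (Real.exp_nonneg _)
  refine step.trans (Real.exp_le_exp.mpr ?_)
  -- final arithmetic: m(1+L) - nL ≤ -(min d n)/18
  rw [le_div_iff₀ (by norm_num : (0:ℝ) < 18)]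
  have hminn : min (d : ℝ) (n : ℝ) ≤ n := min_le_right _ _
  have hmind : min (d : ℝ) (n : ℝ) ≤ d := min_le_left _ _
  rcases le_or_gt (0.06 : ℝ) L with hc | hc
  · -- large L case, use min ≤ n
    have h3 : (0 : ℝ) ≤ ((n : ℝ) - 749 * m) * (L - 1 / 18) :=
      mul_nonneg (by linarith) (by linarith)
    have h4 : (0.06 : ℝ) * m ≤ L * m :=
      mul_le_mul_of_nonneg_right hc (le_of_lt hm0)
    nlinarith
  · -- small L case, use min ≤ d and d ≤ m / 0.94
    have hdle : (d : ℝ) ≤ (m : ℝ) * 1.07 := by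
      have h1 : (1 : ℝ) - 0.06 ≤ Real.exp (-0.06) := by
        have := Real.add_one_le_exp (-0.06 : ℝ); linarith
      have h2 : Real.exp (-0.06 : ℝ) = (Real.exp 0.06)⁻¹ := Real.exp_neg _
      have h3 : (0 : ℝ) < Real.exp 0.06 := Real.exp_pos _
      have h4 : Real.exp (0.06 : ℝ) ≤ 1 / 0.94 := by
        rw [h2] at h1
        rw [le_div_iff₀ (by norm_num)]
        nlinarith [mul_inv_cancel₀ (ne_of_gt h3)]
      have h5 : (d : ℝ) / m ≤ 1 / 0.94 := by
        rw [← hexpL]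
        exact (Real.exp_le_exp.mpr hc.le).trans h4
      rw [div_le_div_iff₀ hm0 (by norm_num : (0:ℝ) < 0.94)] at h5
      linarith
    have h6 : 749 * (m : ℝ) * 0.0098 ≤ (n : ℝ) * L := by
      have : (0:ℝ) ≤ 749 * (m:ℝ) := by positivity
      nlinarith
    have h7 : (m : ℝ) * L ≤ (m : ℝ) * 0.06 :=
      mul_le_mul_of_nonneg_left hc.le (le_of_lt hm0)
    linarith

/-- Number of unique elements among `n` i.i.d. uniform samples from `{1,…,d}`, special case:
for any real `t ≤ 0.99 d` and any `n ≥ 750 t`,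
`P[X_n ≤ t(1 + 2/10000)] ≤ exp(−min(d,n)/18)`. -/
theorem unique_elements_sampling_special_case (n d : ℕ) (t : ℝ)
    (ht : t ≤ 0.99 * d) (hn : (n : ℝ) ≥ 750 * t) :
    uniformTuples n d
        {p | ((Finset.univ.image p).card : ℝ) ≤ t * (1 + 2 / 10000)} ≤
      ENNReal.ofReal (Real.exp (-(min (d : ℝ) (n : ℝ)) / 18)) := by
  rcases Nat.eq_zero_or_pos n with hn0 | hn1
  · -- n = 0 : RHS is 1, LHS ≤ measure of whole space = 1
    subst hn0
    have hrhs : ENNReal.ofReal (Real.exp (-(min (d : ℝ) ((0:ℕ) : ℝ)) / 18)) = 1 := by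
      simp [min_eq_right (Nat.cast_nonneg d : (0:ℝ) ≤ (d:ℝ))]
    rw [hrhs]
    have : uniformTuples 0 d Set.univ = 1 := by
      rw [uniformTuples, Measure.pi_of_empty]
      simp
    calc uniformTuples 0 d _ ≤ uniformTuples 0 d Set.univ :=
          measure_mono (Set.subset_univ _)
      _ = 1 := this
  rcases Nat.eq_zero_or_pos d with hd0 | hd1
  · -- d = 0 : the space is empty
    subst hd0
    haveI : IsEmpty (Fin n → Fin 0) := by
      haveI : Nonempty (Fin n) := ⟨⟨0, hn1⟩⟩
      infer_instance
    rw [Set.eq_empty_of_isEmpty {p : Fin n → Fin 0 |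
      ((Finset.univ.image p).card : ℝ) ≤ t * (1 + 2 / 10000)}]
    simp
  by_cases hlt : t * (1 + 2 / 10000) < 1
  · -- the event is empty since the image always has at least one element
    have hempty : {p : Fin n → Fin d |
        ((Finset.univ.image p).card : ℝ) ≤ t * (1 + 2 / 10000)} = ∅ := by
      ext p
      simp only [Set.mem_setOf_eq, Set.mem_empty_iff_false, iff_false, not_le]
      have hpos : 0 < (Finset.univ.image p).card := by
        refine Finset.card_pos.mpr ?_
        exact ⟨p ⟨0, hn1⟩, Finset.mem_image_of_mem p (Finset.mem_univ _)⟩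
      have : (1 : ℝ) ≤ ((Finset.univ.image p).card : ℝ) := by exact_mod_cast hpos
      linarith
    rw [hempty]
    simp
  push_neg at hlt
  -- main case
  set m : ℕ := ⌊t * (1 + 2 / 10000)⌋₊ with hmdef
  have htpos : 0 < t := by nlinarith
  have hm1 : 1 ≤ m := Nat.le_floor (by exact_mod_cast hlt)
  have hmr : (m : ℝ) ≤ t * (1 + 2 / 10000) := Nat.floor_le (by linarith)
  have hmd : (m : ℝ) ≤ 0.9902 * d := by nlinarith
  have hnm : 749 * (m : ℝ) ≤ n := by nlinarith
  have hm0R : (0 : ℝ) < m := by exact_mod_cast hm1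
  have hd0R : (0 : ℝ) < d := by exact_mod_cast hd1
  have hmltd : m < d := by
    have : (m : ℝ) < d := by nlinarith
    exact_mod_cast this
  haveI hfin : IsFiniteMeasure (((d : ℝ≥0∞))⁻¹ • Measure.count : Measure (Fin d)) := by
    constructor
    rw [Measure.smul_apply, smul_eq_mul, Measure.count_apply_finite _ (Set.finite_univ)]
    exact ENNReal.mul_lt_top (by simp [ENNReal.inv_lt_top]; exact_mod_cast hd1) (by simp)
  -- union bound
  have hsub : {p : Fin n → Fin d |
      ((Finset.univ.image p).card : ℝ) ≤ t * (1 + 2 / 10000)} ⊆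
      ⋃ S ∈ Finset.powersetCard m (Finset.univ : Finset (Fin d)),
        Set.pi Set.univ (fun _ : Fin n => (S : Set (Fin d))) := by
    intro p hp
    simp only [Set.mem_setOf_eq] at hp
    have hcard : (Finset.univ.image p).card ≤ m := Nat.le_floor hp
    obtain ⟨S, hS1, hS2⟩ := Finset.exists_superset_card_eq hcard
      (by simpa using hmltd.le)
    refine Set.mem_iUnion₂.mpr ⟨S, ?_, ?_⟩
    · simp [Finset.mem_powersetCard, hS2]
    · intro i _
      exact hS1 (Finset.mem_image_of_mem p (Finset.mem_univ i))
  refine le_trans (measure_mono hsub) ?_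
  refine le_trans (measure_biUnion_finset_le _ _) ?_
  have hterm : ∀ S ∈ Finset.powersetCard m (Finset.univ : Finset (Fin d)),
      uniformTuples n d (Set.pi Set.univ (fun _ : Fin n => (S : Set (Fin d))))
        = (((d : ℝ≥0∞))⁻¹ * m) ^ n := by
    intro S hS
    rw [Finset.mem_powersetCard] at hS
    rw [uniformTuples, Measure.pi_pi]
    simp only [Measure.smul_apply, smul_eq_mul, Measure.count_apply_finset, hS.2]
    rw [Finset.prod_const, Finset.card_univ, Fintype.card_fin]
  rw [Finset.sum_congr rfl hterm, Finset.sum_const, Finset.card_powersetCard,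
    Finset.card_univ, Fintype.card_fin, nsmul_eq_mul]
  -- convert to ofReal
  have hfrac : ((d : ℝ≥0∞))⁻¹ * (m : ℝ≥0∞) = ENNReal.ofReal ((m : ℝ) / d) := by
    rw [ENNReal.ofReal_div_of_pos hd0R]
    simp [ENNReal.ofReal_natCast, div_eq_mul_inv, mul_comm]
  rw [hfrac, ← ENNReal.ofReal_pow (by positivity),
    show ((d.choose m : ℕ) : ℝ≥0∞) = ENNReal.ofReal ((d.choose m : ℕ) : ℝ) by
      simp [ENNReal.ofReal_natCast],
    ← ENNReal.ofReal_mul (by positivity)]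
  exact ENNReal.ofReal_le_ofReal (key_real d m n hm1 hmd hnm)

end
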